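/- If a ℤ-dynamical system (X, T) on a compact metric space admits two disjoint open sets U₀, U₁ each of whose ℤ-orbits cover X, then there is a continuous map f : X → [0,1] such that for every x ∈ X the set f({T^n x : n ∈ ℤ}) contains both 0 and 1. -/

import Mathlib

open Set Metric

private lemma cont_zpow {X : Type*} [TopologicalSpace X] (T : Equiv.Perm X)
    (hT : Continuous T) (hT' : Continuous T.symm) : ∀ n : ℤ, Continuous ⇑(T ^ n) := by
  intro n
  induction n using Int.induction_on with
  | zero => simpa using continuous_id
  | succ n ih =>
      have : (T ^ ((n : ℤ) + 1)) = T ^ (n : ℤ) * T := by rw [zpow_add_one]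
      rw [this, Equiv.Perm.coe_mul]
      exact ih.comp hT
  | pred n ih =>
      have : (T ^ (-(n : ℤ) - 1)) = T ^ (-(n : ℤ)) * T⁻¹ := by rw [zpow_sub_one]
      rw [this, Equiv.Perm.coe_mul]
      have : ⇑(T⁻¹) = ⇑T.symm := rfl
      rw [this]
      exact ih.comp hT'

private lemma aux_closed {X : Type*} [MetricSpace X] [CompactSpace X]
    (T : Equiv.Perm X) (hT : Continuous T) (hT' : Continuous T.symm)
    (U : Set X) (hU : IsOpen U) (hne : Uᶜ.Nonempty)
    (hc : (⋃ n : ℤ, ⇑(T ^ n) '' U) = univ) :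
    ∃ F : Set X, IsClosed F ∧ F ⊆ U ∧ ∀ x : X, ∃ n : ℤ, (T ^ n) x ∈ F := by
  have hcont := cont_zpow T hT hT'
  have himg : ∀ n : ℤ, ⇑(T ^ n) '' U = ⇑(T ^ (-n)) ⁻¹' U := by
    intro n
    rw [Equiv.image_eq_preimage_symm]
    ext x
    rw [zpow_neg]
    rfl
  have hopen : ∀ n : ℤ, IsOpen (⇑(T ^ n) '' U) := by
    intro n
    rw [himg n]
    exact hU.preimage (hcont _)
  obtain ⟨t, ht⟩ := isCompact_univ.elim_finite_subcover (fun n : ℤ => ⇑(T ^ n) '' U)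
    hopen (by rw [hc])
  -- the sum of infDist of translates is continuous and positive
  set g : X → ℝ := fun x => ∑ n ∈ t, infDist ((T ^ (-n)) x) Uᶜ with hg
  have hgc : Continuous g := by
    apply continuous_finset_sum
    intro n _
    exact (continuous_infDist_pt _).comp (hcont _)
  have hgpos : ∀ x, 0 < g x := by
    intro x
    obtain ⟨n, hnt, hxn⟩ := mem_iUnion₂.mp (ht (mem_univ x))
    have hx' : (T ^ (-n)) x ∈ U := by
      rw [himg n] at hxn
      exact hxn
    have hpos : 0 < infDist ((T ^ (-n)) x) Uᶜ :=
      (hU.isClosed_compl.notMem_iff_infDist_pos hne).mp (by simpa using hx')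
    exact Finset.sum_pos' (fun m _ => infDist_nonneg) ⟨n, hnt, hpos⟩
  -- minimum of g
  have hXne : Nonempty X := ⟨hne.choose⟩
  obtain ⟨x₀, -, hx₀⟩ := isCompact_univ.exists_isMinOn univ_nonempty hgc.continuousOn
  set ε : ℝ := g x₀ with hε
  have hεpos : 0 < ε := hgpos x₀
  have htne : t.Nonempty := by
    rcases Finset.eq_empty_or_nonempty t with h | h
    · have := hgpos hXne.some
      simp [hg, h] at this
    · exact h
  set δ : ℝ := ε / t.card with hδ
  have hδpos : 0 < δ := div_pos hεpos (by exact_mod_cast (Finset.card_pos (s := t)).mpr htne)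
  refine ⟨{x | δ ≤ infDist x Uᶜ}, isClosed_le continuous_const (continuous_infDist_pt _),
    ?_, ?_⟩
  · intro x hx
    by_contra hxU
    have hx0 : infDist x Uᶜ = 0 := infDist_zero_of_mem (by simpa using hxU)
    simp only [mem_setOf_eq, hx0] at hx
    linarith
  · intro x
    -- some term of the sum is at least the average
    have hsum : ε ≤ g x := hx₀ (mem_univ x)
    by_contra h
    push_neg at h
    have hlt : ∀ n ∈ t, infDist ((T ^ (-n)) x) Uᶜ < δ := by
      intro n hn
      have := h (-n)
      simpa using lt_of_not_ge (fun hle => this (by simpa using hle))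
    have : g x < t.card * δ := by
      calc g x = ∑ n ∈ t, infDist ((T ^ (-n)) x) Uᶜ := rfl
        _ < ∑ _n ∈ t, δ := Finset.sum_lt_sum_of_nonempty htne hlt
        _ = t.card * δ := by rw [Finset.sum_const, nsmul_eq_mul]
    have hcard : (t.card : ℝ) ≠ 0 := by exact_mod_cast (Finset.card_pos (s := t)).mpr htne |>.ne'
    rw [hδ] at this
    rw [mul_div_cancel₀ _ hcard] at this
    linarith

/-- If a `ℤ`-system on a compact metric space has two disjoint open sets
whose orbits each cover `X`, then there is a continuous `f : X → [0,1]` such that every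
orbit image `f({Tⁿx : n ∈ ℤ})` contains both `0` and `1`. -/
theorem exists_map_hitting_zero_and_one {X : Type*} [MetricSpace X] [CompactSpace X]
    (T : Equiv.Perm X) (hT : Continuous T) (hT' : Continuous T.symm)
    (U₀ U₁ : Set X) (h₀ : IsOpen U₀) (h₁ : IsOpen U₁) (hdisj : Disjoint U₀ U₁)
    (hc₀ : (⋃ n : ℤ, ⇑(T ^ n) '' U₀) = univ) (hc₁ : (⋃ n : ℤ, ⇑(T ^ n) '' U₁) = univ) :
    ∃ f : C(X, ℝ), (∀ x : X, f x ∈ Icc (0 : ℝ) 1) ∧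
      ∀ x : X, (∃ n : ℤ, f ((T ^ n) x) = 0) ∧ (∃ n : ℤ, f ((T ^ n) x) = 1) := by
  rcases isEmpty_or_nonempty X with hE | hNE
  · exact ⟨0, fun x => isEmptyElim x, fun x => isEmptyElim x⟩
  -- U₀ and U₁ are nonempty
  have hU₀ne : U₀.Nonempty := by
    by_contra h
    rw [not_nonempty_iff_eq_empty] at h
    simp [h] at hc₀
    exact univ_nonempty.ne_empty hc₀.symm
  have hU₁ne : U₁.Nonempty := by
    by_contra h
    rw [not_nonempty_iff_eq_empty] at h
    simp [h] at hc₁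
    exact univ_nonempty.ne_empty hc₁.symm
  have hne₀ : U₀ᶜ.Nonempty := hU₁ne.mono (fun x hx => fun hx0 => hdisj.ne_of_mem hx0 hx rfl)
  have hne₁ : U₁ᶜ.Nonempty := hU₀ne.mono (fun x hx => fun hx1 => hdisj.ne_of_mem hx hx1 rfl)
  obtain ⟨F₀, hF₀c, hF₀U, hF₀⟩ := aux_closed T hT hT' U₀ h₀ hne₀ hc₀
  obtain ⟨F₁, hF₁c, hF₁U, hF₁⟩ := aux_closed T hT hT' U₁ h₁ hne₁ hc₁
  have hFd : Disjoint F₀ F₁ := hdisj.mono hF₀U hF₁U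
  obtain ⟨f, hf0, hf1, hf01⟩ := exists_continuous_zero_one_of_isClosed hF₀c hF₁c hFd
  refine ⟨f, hf01, fun x => ⟨?_, ?_⟩⟩
  · obtain ⟨n, hn⟩ := hF₀ x
    exact ⟨n, hf0 hn⟩
  · obtain ⟨n, hn⟩ := hF₁ x
    exact ⟨n, hf1 hn⟩
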